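/- arXiv:2411.17104 — 2 statements merged into one kernel-verified Lean document; each statement's English description precedes it below -/
import Mathlib

section
/- Fix A > 0, c > 0, constants δ₁,…,δₙ ∈ ℝ and σ₁,…,σₙ > 0, and let φ(x) := (½ log(1+|x|²)+1)², L := ½ Σᵢ (σᵢ² ∂²/∂xᵢ² + 2δᵢ ∂/∂xᵢ). Then there exists C > 0 such that, with ψ(t,x) := e^{(A + C(T−t))φ(x)} and t₁ := max(T − A/C, 0), one has −∂_tψ(t,x) − Lψ(t,x) − c(ψ(t,x) + |σ∇ψ(t,x)|) > 0 for all (t,x) ∈ [t₁, T] × ℝⁿ, where σ = diag(σ₁,…,σₙ). -/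
/-- First partial derivative in the `i`-th coordinate. -/
noncomputable def pd {n : ℕ} (f : (Fin n → ℝ) → ℝ) (i : Fin n) (x : Fin n → ℝ) : ℝ :=
  deriv (fun s => f (Function.update x i s)) (x i)

/-- Second partial derivative in the `i`-th coordinate. -/
noncomputable def pd2 {n : ℕ} (f : (Fin n → ℝ) → ℝ) (i : Fin n) (x : Fin n → ℝ) : ℝ :=
  deriv (fun s => pd f i (Function.update x i s)) (x i)

noncomputable def bu (r' s : ℝ) : ℝ := (1/2) * Real.log (1 + r' + s^2) + 1
noncomputable def bf (β r' s : ℝ) : ℝ := Real.exp (β * (bu r' s)^2)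
noncomputable def bg (β r' s : ℝ) : ℝ := 2*β*(bu r' s * s) / (1 + r' + s^2)
noncomputable def bgd (β r' s : ℝ) : ℝ :=
  2*β*(s^2 + bu r' s * (1 + r' + s^2) - 2*(bu r' s)*s^2) / (1 + r' + s^2)^2

lemma q_pos {r' : ℝ} (hr : 0 ≤ r') (s : ℝ) : (0:ℝ) < 1 + r' + s^2 := by positivity

lemma hasDerivAt_q (r' s : ℝ) : HasDerivAt (fun s : ℝ => 1 + r' + s^2) (2*s) s := by
  simpa using (hasDerivAt_pow 2 s).const_add (1 + r')

lemma hasDerivAt_bu {r' : ℝ} (hr : 0 ≤ r') (s : ℝ) :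
    HasDerivAt (fun s => bu r' s) (s / (1 + r' + s^2)) s := by
  have h := (((hasDerivAt_q r' s).log (q_pos hr s).ne').const_mul (1/2 : ℝ)).add_const 1
  refine h.congr_deriv ?_
  field_simp

lemma hasDerivAt_bf {r' : ℝ} (hr : 0 ≤ r') (β s : ℝ) :
    HasDerivAt (fun s => bf β r' s) (bf β r' s * bg β r' s) s := by
  have h := ((((hasDerivAt_bu hr s).pow 2).const_mul β)).exp
  refine h.congr_deriv ?_
  unfold bf bg
  simp only [Pi.pow_apply]
  have := (q_pos hr s).ne'
  field_simp
  ring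

lemma hasDerivAt_bg {r' : ℝ} (hr : 0 ≤ r') (β s : ℝ) :
    HasDerivAt (fun s => bg β r' s) (bgd β r' s) s := by
  have hnum : HasDerivAt (fun s => 2*β*(bu r' s * s))
      (2*β*((s / (1 + r' + s^2)) * s + bu r' s * 1)) s :=
    ((hasDerivAt_bu hr s).mul (hasDerivAt_id s)).const_mul (2*β)
  have h := hnum.div (hasDerivAt_q r' s) (q_pos hr s).ne'
  refine h.congr_deriv ?_
  unfold bgd
  have := (q_pos hr s).ne'
  field_simp

lemma hasDerivAt_bfg {r' : ℝ} (hr : 0 ≤ r') (β s : ℝ) :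
    HasDerivAt (fun s => bf β r' s * bg β r' s)
      (bf β r' s * ((bg β r' s)^2 + bgd β r' s)) s := by
  have h := (hasDerivAt_bf hr β s).mul (hasDerivAt_bg hr β s)
  refine h.congr_deriv ?_
  ring

lemma sum_update_sq {n : ℕ} (x : Fin n → ℝ) (i : Fin n) (s : ℝ) :
    ∑ j, (Function.update x i s j)^2 = ((∑ j, x j ^2) - x i ^2) + s^2 := by
  have h : (fun j => (Function.update x i s j)^2)
      = Function.update (fun j => x j ^2) i (s^2) := by
    funext j
    rcases eq_or_ne j i with h | h
    · subst h; simp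
    · simp [Function.update_of_ne h]
  rw [h, Finset.sum_update_of_mem (Finset.mem_univ i),
    Finset.sum_sdiff_eq_sub (Finset.subset_univ {i}), Finset.sum_singleton]
  ring

set_option maxHeartbeats 4000000 in
theorem strict_supersolution_barrier (n : ℕ) (T A c : ℝ) (δ σ : Fin n → ℝ)
    (hT : 0 < T) (hA : 0 < A) (hc : 0 < c) (hσ : ∀ i, 0 < σ i) :
    ∃ C > 0,
      ∀ t : ℝ, ∀ x : Fin n → ℝ, max (T - A / C) 0 ≤ t → t ≤ T →
        (letI φ : (Fin n → ℝ) → ℝ :=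
            fun y => ((1 / 2) * Real.log (1 + ∑ i, y i ^ 2) + 1) ^ 2
         letI ψ : ℝ → (Fin n → ℝ) → ℝ :=
            fun s y => Real.exp ((A + C * (T - s)) * φ y)
         0 < -(deriv (fun s => ψ s x) t)
            - (1 / 2) * ∑ i, (σ i ^ 2 * pd2 (ψ t) i x + 2 * δ i * pd (ψ t) i x)
            - c * (ψ t x + Real.sqrt (∑ i, (σ i * pd (ψ t) i x) ^ 2))) := by
  classical
  set K3 : ℝ := (1/2) * ∑ i, (σ i ^ 2 * (16*A^2 + 16*A) + 8*A*|δ i|) with hK3def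
  set K4 : ℝ := 4*A*Real.sqrt (∑ i, σ i ^ 2) with hK4def
  have hK3nn : 0 ≤ K3 := by
    rw [hK3def]
    apply mul_nonneg (by norm_num)
    apply Finset.sum_nonneg
    intro i _
    have h1 : (0:ℝ) ≤ 16*A^2 + 16*A := by nlinarith [sq_nonneg A]
    have h2 : (0:ℝ) ≤ σ i ^ 2 * (16*A^2 + 16*A) := mul_nonneg (sq_nonneg _) h1
    have h3 : (0:ℝ) ≤ 8*A*|δ i| := mul_nonneg (by linarith) (abs_nonneg _)
    linarith
  have hK4nn : 0 ≤ K4 := by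
    rw [hK4def]
    exact mul_nonneg (by linarith) (Real.sqrt_nonneg _)
  have hCpos : 0 < K3 + c*(1+K4) + 1 := by nlinarith [mul_pos hc (show (0:ℝ) < 1 + K4 by linarith)]
  refine ⟨K3 + c*(1+K4) + 1, hCpos, ?_⟩
  intro t x ht1 ht2
  set C : ℝ := K3 + c*(1+K4) + 1 with hCdef
  show 0 < -(deriv (fun s => Real.exp ((A + C * (T - s)) *
          ((1 / 2) * Real.log (1 + ∑ i, x i ^ 2) + 1) ^ 2)) t)
      - (1 / 2) * ∑ i, (σ i ^ 2 * pd2 (fun y => Real.exp ((A + C * (T - t)) *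
            ((1 / 2) * Real.log (1 + ∑ j, y j ^ 2) + 1) ^ 2)) i x
          + 2 * δ i * pd (fun y => Real.exp ((A + C * (T - t)) *
            ((1 / 2) * Real.log (1 + ∑ j, y j ^ 2) + 1) ^ 2)) i x)
      - c * (Real.exp ((A + C * (T - t)) * ((1 / 2) * Real.log (1 + ∑ i, x i ^ 2) + 1) ^ 2)
          + Real.sqrt (∑ i, (σ i * pd (fun y => Real.exp ((A + C * (T - t)) *
            ((1 / 2) * Real.log (1 + ∑ j, y j ^ 2) + 1) ^ 2)) i x) ^ 2))
  set r : ℝ := ∑ j, x j ^ 2 with hrdef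
  have hr0 : 0 ≤ r := by rw [hrdef]; positivity
  set β : ℝ := A + C * (T - t) with hβdef
  have hβA : A ≤ β := by
    have h0 : 0 ≤ C * (T - t) := mul_nonneg hCpos.le (by linarith)
    rw [hβdef]; linarith
  have hβ2A : β ≤ 2*A := by
    have h1 : T - A / C ≤ t := le_trans (le_max_left _ _) ht1
    have h2 : T - t ≤ A / C := by linarith
    have h3 : C * (T - t) ≤ A := by
      calc C * (T - t) ≤ C * (A / C) := mul_le_mul_of_nonneg_left h2 hCpos.le
        _ = A := by field_simp
    rw [hβdef]; linarith
  have hβpos : 0 < β := lt_of_lt_of_le hA hβA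
  set u : ℝ := (1 / 2) * Real.log (1 + r) + 1 with hudef
  have hQ1 : (1:ℝ) ≤ 1 + r := by linarith
  have hQpos : (0:ℝ) < 1 + r := by linarith
  have hu1 : 1 ≤ u := by
    have := Real.log_nonneg hQ1
    rw [hudef]; linarith
  have hupos : 0 < u := by linarith
  have hu2 : (1:ℝ) ≤ u^2 := by nlinarith
  set Ψ : ℝ := Real.exp (β * u ^ 2) with hΨdef
  have hΨpos : 0 < Ψ := by rw [hΨdef]; exact Real.exp_pos _
  clear_value Ψ u β r C K4 K3
  -- time derivative
  have hdt : deriv (fun s => Real.exp ((A + C * (T - s)) * u ^ 2)) t = -C * u^2 * Ψ := by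
    have h2 : HasDerivAt (fun s : ℝ => A + C * (T - s)) (-C) t := by
      simpa using (((hasDerivAt_id t).const_sub T).const_mul C).const_add A
    have h1 : HasDerivAt (fun s : ℝ => (A + C * (T - s)) * u ^ 2) (-C * u ^ 2) t :=
      h2.mul_const _
    rw [h1.exp.deriv, hΨdef, hβdef]
    ring
  -- spatial derivatives
  have hri : ∀ i : Fin n, x i ^ 2 ≤ r := fun i => by
    rw [hrdef]
    exact Finset.single_le_sum (f := fun j => x j ^ 2) (fun j _ => sq_nonneg _)
      (Finset.mem_univ i)
  have hr' : ∀ i : Fin n, 0 ≤ r - x i ^ 2 := fun i => by linarith [hri i]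
  have hfun : ∀ i : Fin n,
      (fun s => Real.exp (β * ((1 / 2) * Real.log (1 + ∑ j, Function.update x i s j ^ 2) + 1) ^ 2))
        = bf β (r - x i ^ 2) := by
    intro i
    funext s
    rw [sum_update_sq, ← hrdef]
    unfold bf bu
    have h4 : (1:ℝ) + (r - x i ^ 2 + s ^ 2) = 1 + (r - x i ^ 2) + s ^ 2 := by ring
    rw [h4]
  have hbu : ∀ i : Fin n, bu (r - x i ^ 2) (x i) = u := by
    intro i
    unfold bu
    rw [hudef]
    have h4 : (1:ℝ) + (r - x i ^ 2) + x i ^ 2 = 1 + r := by ring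
    rw [h4]
  have hbfΨ : ∀ i : Fin n, bf β (r - x i ^ 2) (x i) = Ψ := by
    intro i
    unfold bf
    rw [hbu i, hΨdef]
  have hpd : ∀ i : Fin n,
      pd (fun y => Real.exp (β * ((1 / 2) * Real.log (1 + ∑ j, y j ^ 2) + 1) ^ 2)) i x
        = Ψ * bg β (r - x i ^ 2) (x i) := by
    intro i
    simp only [pd]
    rw [hfun i, (hasDerivAt_bf (hr' i) β (x i)).deriv, hbfΨ i]
  have hpd2 : ∀ i : Fin n,
      pd2 (fun y => Real.exp (β * ((1 / 2) * Real.log (1 + ∑ j, y j ^ 2) + 1) ^ 2)) i x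
        = Ψ * ((bg β (r - x i ^ 2) (x i)) ^ 2 + bgd β (r - x i ^ 2) (x i)) := by
    intro i
    simp only [pd2, pd]
    have h2 : (fun s => deriv (fun s' => Real.exp (β * ((1 / 2) *
          Real.log (1 + ∑ j, Function.update (Function.update x i s) i s' j ^ 2) + 1) ^ 2))
          (Function.update x i s i))
        = fun s => bf β (r - x i ^ 2) s * bg β (r - x i ^ 2) s := by
      funext s
      have h3 : (fun s' => Real.exp (β * ((1 / 2) *
            Real.log (1 + ∑ j, Function.update (Function.update x i s) i s' j ^ 2) + 1) ^ 2))
          = bf β (r - x i ^ 2) := by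
        funext s'
        rw [Function.update_idem]
        exact congrFun (hfun i) s'
      rw [h3, Function.update_self]
      exact (hasDerivAt_bf (hr' i) β s).deriv
    rw [h2, (hasDerivAt_bfg (hr' i) β (x i)).deriv, hbfΨ i]
  -- bounds
  have hgabs : ∀ i : Fin n, |bg β (r - x i ^ 2) (x i)| ≤ 4*A*u^2 := by
    intro i
    have hxabs : |x i| ≤ 1 + r := by
      nlinarith [sq_abs (x i), abs_nonneg (x i), hri i]
    have e : bg β (r - x i ^ 2) (x i) = 2*β*(u * x i) / (1 + r) := by
      unfold bg
      rw [hbu i]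
      have h4 : (1:ℝ) + (r - x i ^ 2) + x i ^ 2 = 1 + r := by ring
      rw [h4]
    rw [e, abs_div, abs_of_pos hQpos, div_le_iff₀ hQpos]
    have h1 : |2*β*(u * x i)| = 2*β*u*|x i| := by
      rw [abs_mul, abs_mul, abs_mul, abs_of_pos hβpos, abs_of_pos hupos, abs_two]
      ring
    rw [h1]
    have h2bu : (0:ℝ) ≤ 2*β*u :=
      mul_nonneg (mul_nonneg (by norm_num) hβpos.le) hupos.le
    have h5 : 2*β*u*|x i| ≤ 2*β*u*(1+r) :=
      mul_le_mul_of_nonneg_left hxabs h2bu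
    have huu : u ≤ u^2 := by nlinarith [mul_le_mul_of_nonneg_left hu1 hupos.le]
    have h6 : 2*β*u ≤ 4*A*u^2 := by
      have := mul_le_mul (show 2*β ≤ 4*A by linarith) huu hupos.le
        (by linarith : (0:ℝ) ≤ 4*A)
      linarith
    have h8 := mul_le_mul_of_nonneg_right h6 hQpos.le
    linarith
  have hsec : ∀ i : Fin n,
      (bg β (r - x i ^ 2) (x i)) ^ 2 + bgd β (r - x i ^ 2) (x i) ≤ (16*A^2 + 16*A)*u^2 := by
    intro i
    have e1 : bg β (r - x i ^ 2) (x i) = 2*β*(u * x i) / (1 + r) := by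
      unfold bg
      rw [hbu i]
      have h4 : (1:ℝ) + (r - x i ^ 2) + x i ^ 2 = 1 + r := by ring
      rw [h4]
    have e2 : bgd β (r - x i ^ 2) (x i)
        = 2*β*(x i ^ 2 + u*(1+r) - 2*u*(x i)^2) / (1 + r)^2 := by
      unfold bgd
      rw [hbu i]
      have h4 : (1:ℝ) + (r - x i ^ 2) + x i ^ 2 = 1 + r := by ring
      rw [h4]
    rw [e1, e2, div_pow, ← add_div, div_le_iff₀ (pow_pos hQpos 2)]
    -- (2β(u xi))² + 2β(xi² + u(1+r) − 2u xi²) ≤ (16A²+16A)u²(1+r)²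
    have hb2 : β^2 ≤ 4*A^2 := by nlinarith
    have hx2 : x i ^ 2 ≤ (1+r)^2 := by nlinarith [hri i]
    have h1 : (2*β*(u * x i))^2 ≤ 16*A^2*u^2*(1+r)^2 := by
      have h4 : β^2 * (x i)^2 ≤ (4*A^2) * (1+r)^2 :=
        mul_le_mul hb2 hx2 (sq_nonneg _) (by positivity)
      linarith [mul_le_mul_of_nonneg_left h4
        (mul_nonneg (by norm_num : (0:ℝ) ≤ 4) (sq_nonneg u))]
    have hin : x i ^ 2 + u*(1+r) - 2*u*(x i)^2 ≤ 2*u*(1+r)^2 := by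
      have a1 : u*(1+r) ≤ u*(1+r)^2 :=
        mul_le_mul_of_nonneg_left (by nlinarith [mul_nonneg hr0 hQpos.le]) hupos.le
      have a2 : (0:ℝ) ≤ u*(x i)^2 := mul_nonneg hupos.le (sq_nonneg _)
      have a3 : (1:ℝ)*(1+r)^2 ≤ u*(1+r)^2 :=
        mul_le_mul_of_nonneg_right hu1 (sq_nonneg _)
      linarith [hx2]
    have h2 : 2*β*(x i ^ 2 + u*(1+r) - 2*u*(x i)^2) ≤ 16*A*u^2*(1+r)^2 := by
      have h5 := mul_le_mul_of_nonneg_left hin (by linarith : (0:ℝ) ≤ 2*β)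
      have hq2 : (0:ℝ) ≤ (1+r)^2 := sq_nonneg _
      have huq : (0:ℝ) ≤ u*(1+r)^2 := mul_nonneg hupos.le hq2
      have h6 : 2*β*(2*u*(1+r)^2) ≤ 2*(2*A)*(2*u*(1+r)^2) := by
        have := mul_le_mul_of_nonneg_right hβ2A
          (by linarith : (0:ℝ) ≤ 2*(2*u*(1+r)^2))
        linarith [this]
      have h7 : 2*(2*A)*(2*u*(1+r)^2) ≤ 16*A*u^2*(1+r)^2 := by
        have h7a := mul_le_mul_of_nonneg_left hu1
          (mul_nonneg (mul_nonneg (by linarith : (0:ℝ) ≤ 8*A) hupos.le) hq2)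
        have h7b : (0:ℝ) ≤ 8*A*u*(1+r)^2*u :=
          mul_nonneg (mul_nonneg (mul_nonneg (by linarith) hupos.le) hq2) hupos.le
        linarith [h7a, h7b]
      linarith
    nlinarith [h1, h2]
  -- summing up
  have hsum1 : ∑ i, (σ i ^ 2 * pd2 (fun y => Real.exp (β * ((1 / 2) *
        Real.log (1 + ∑ j, y j ^ 2) + 1) ^ 2)) i x
        + 2 * δ i * pd (fun y => Real.exp (β * ((1 / 2) *
        Real.log (1 + ∑ j, y j ^ 2) + 1) ^ 2)) i x)
      ≤ (∑ i, (σ i ^ 2 * (16*A^2 + 16*A) + 8*A*|δ i|)) * (u^2*Ψ) := by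
    rw [Finset.sum_mul]
    apply Finset.sum_le_sum
    intro i _
    rw [hpd i, hpd2 i]
    have h1 : σ i ^ 2 * ((bg β (r - x i ^ 2) (x i)) ^ 2 + bgd β (r - x i ^ 2) (x i))
        ≤ σ i ^ 2 * ((16*A^2 + 16*A)*u^2) :=
      mul_le_mul_of_nonneg_left (hsec i) (sq_nonneg _)
    have h2 : δ i * bg β (r - x i ^ 2) (x i) ≤ |δ i| * (4*A*u^2) := by
      calc δ i * bg β (r - x i ^ 2) (x i) ≤ |δ i * bg β (r - x i ^ 2) (x i)| := le_abs_self _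
        _ = |δ i| * |bg β (r - x i ^ 2) (x i)| := abs_mul _ _
        _ ≤ |δ i| * (4*A*u^2) := mul_le_mul_of_nonneg_left (hgabs i) (abs_nonneg _)
    linarith [mul_le_mul_of_nonneg_right h1 hΨpos.le,
      mul_le_mul_of_nonneg_right h2 hΨpos.le, hΨpos]
  have hQle : Real.sqrt (∑ i, (σ i * pd (fun y => Real.exp (β * ((1 / 2) *
        Real.log (1 + ∑ j, y j ^ 2) + 1) ^ 2)) i x) ^ 2)
      ≤ 4*A*Real.sqrt (∑ i, σ i ^ 2) * (u^2*Ψ) := by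
    have h1 : ∑ i, (σ i * pd (fun y => Real.exp (β * ((1 / 2) *
          Real.log (1 + ∑ j, y j ^ 2) + 1) ^ 2)) i x) ^ 2
        ≤ (∑ i, σ i ^ 2) * (4*A*u^2*Ψ)^2 := by
      rw [Finset.sum_mul]
      apply Finset.sum_le_sum
      intro i _
      rw [hpd i]
      have hG2 : (bg β (r - x i ^ 2) (x i))^2 ≤ (4*A*u^2)^2 := by
        rw [← sq_abs]
        exact pow_le_pow_left₀ (abs_nonneg _) (hgabs i) 2
      linarith [mul_le_mul_of_nonneg_left hG2
        (mul_nonneg (sq_nonneg (σ i)) (sq_nonneg Ψ))]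
    calc Real.sqrt (∑ i, (σ i * pd (fun y => Real.exp (β * ((1 / 2) *
          Real.log (1 + ∑ j, y j ^ 2) + 1) ^ 2)) i x) ^ 2)
        ≤ Real.sqrt ((∑ i, σ i ^ 2) * (4*A*u^2*Ψ)^2) := Real.sqrt_le_sqrt h1
      _ = Real.sqrt (∑ i, σ i ^ 2) * (4*A*u^2*Ψ) := by
          rw [Real.sqrt_mul (Finset.sum_nonneg fun i _ => sq_nonneg _),
            Real.sqrt_sq (mul_nonneg (mul_nonneg (mul_nonneg
              (by norm_num : (0:ℝ) ≤ 4) hA.le) (sq_nonneg u)) hΨpos.le)]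
      _ = 4*A*Real.sqrt (∑ i, σ i ^ 2) * (u^2*Ψ) := by ring
  -- final assembly
  rw [hdt]
  set S1 : ℝ := ∑ i, (σ i ^ 2 * pd2 (fun y => Real.exp (β * ((1 / 2) *
        Real.log (1 + ∑ j, y j ^ 2) + 1) ^ 2)) i x
        + 2 * δ i * pd (fun y => Real.exp (β * ((1 / 2) *
        Real.log (1 + ∑ j, y j ^ 2) + 1) ^ 2)) i x) with hS1def
  set S2 : ℝ := Real.sqrt (∑ i, (σ i * pd (fun y => Real.exp (β * ((1 / 2) *
        Real.log (1 + ∑ j, y j ^ 2) + 1) ^ 2)) i x) ^ 2) with hS2def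
  clear_value S1 S2
  have hΨu : Ψ ≤ u^2 * Ψ := by
    linarith [mul_le_mul_of_nonneg_right hu2 hΨpos.le]
  have hkey : C * (u^2*Ψ) = K3 * (u^2*Ψ) + c*(1+K4) * (u^2*Ψ) + (u^2*Ψ) := by
    rw [hCdef]; ring
  have hS2 : (1/2 : ℝ) * S1 ≤ K3 * (u^2*Ψ) := by
    rw [hK3def]
    linarith [hsum1]
  have hQle' : S2 ≤ K4 * (u^2*Ψ) := by
    rw [hK4def]
    exact hQle
  clear hfun hpd hpd2 hgabs hsec hbu hbfΨ hri hr' hsum1 hQle hdt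
  have hcb : c * (Ψ + S2) ≤ c*(1+K4) * (u^2*Ψ) := by
    have h8 : Ψ + S2 ≤ (1+K4)*(u^2*Ψ) := by linarith [hΨu, hQle']
    have h9 := mul_le_mul_of_nonneg_left h8 hc.le
    linarith [h9]
  have hpos : 0 < u^2*Ψ := mul_pos (by nlinarith : (0:ℝ) < u^2) hΨpos
  linarith [hS2, hcb, hkey, hpos]
end

section
/- Let Π := {x ∈ ℝⁿ : xₙ < x_{n−1} < ⋯ < x₁} and, for α > 0, Π_α := {x ∈ Π : dist(x, ∂Π) ≥ α}. Then Π_α = {x ∈ ℝⁿ : x_{k+1} ≤ x_k − √2·α for all k = 1, …, n−1}, i.e., a point of Π is at distance at least α from the boundary of Π if and only if each pair of consecutive ordered coordinates differs by at least √2·α. -/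
open Metric Set Finset

/-- consecutive criterion for strict antitonicity on `Fin n` -/
lemma strictAnti_iff_consec {n : ℕ} (x : Fin n → ℝ) :
    StrictAnti x ↔ ∀ i j : Fin n, (i : ℕ) + 1 = (j : ℕ) → x j < x i := by
  constructor
  · intro h i j hij
    exact h (Fin.lt_def.mpr (by omega))
  · intro h
    have key : ∀ d : ℕ, ∀ i j : Fin n, (i : ℕ) + 1 + d = (j : ℕ) → x j < x i := by
      intro d
      induction d with
      | zero => intro i j hij; exact h i j (by omega)
      | succ d ih =>
        intro i j hij
        have hm : (i : ℕ) + 1 < n := by have := j.isLt; omega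
        calc x j < x ⟨(i : ℕ) + 1, hm⟩ := ih _ j (by simp; omega)
          _ < x i := h i ⟨(i : ℕ) + 1, hm⟩ (by simp)
    intro i j hij
    have hij' : (i : ℕ) < (j : ℕ) := Fin.lt_def.mp hij
    exact key ((j : ℕ) - (i : ℕ) - 1) i j (by omega)

/-- weakly antitone vectors are in the closure of the strictly antitone set -/
lemma antitone_mem_closure {n : ℕ} (z : EuclideanSpace ℝ (Fin n)) (hz : Antitone z) :
    z ∈ closure {y : EuclideanSpace ℝ (Fin n) | StrictAnti y} := by
  rw [Metric.mem_closure_iff]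
  intro ε hε
  set δ := ε / ((n : ℝ) ^ 2 + 1) with hδdef
  have hn0 : (0 : ℝ) ≤ n := Nat.cast_nonneg n
  have hδ : 0 < δ := by positivity
  refine ⟨WithLp.toLp 2 (fun i => z i - (i : ℕ) * δ : Fin n → ℝ), ?_, ?_⟩
  · intro i j hij
    have h1 : ((i : ℕ) : ℝ) < ((j : ℕ) : ℝ) := by exact_mod_cast Fin.lt_def.mp hij
    have h2 := hz hij.le
    have : ((i : ℕ) : ℝ) * δ < ((j : ℕ) : ℝ) * δ := by nlinarith
    simp only [PiLp.toLp_apply]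
    linarith
  · rw [EuclideanSpace.dist_eq]
    have hterm : ∀ i : Fin n,
        dist (z i) (z i - (i : ℕ) * δ) ^ 2 ≤ ((n : ℝ) * δ) ^ 2 := by
      intro i
      rw [Real.dist_eq]
      have hi : ((i : ℕ) : ℝ) ≤ (n : ℝ) := by exact_mod_cast (i.isLt).le
      have h0 : (0 : ℝ) ≤ (i : ℕ) * δ := by positivity
      have : |z i - (z i - (i : ℕ) * δ)| = (i : ℕ) * δ := by
        rw [show z i - (z i - (i : ℕ) * δ) = (i : ℕ) * δ by ring, abs_of_nonneg h0]
      rw [this]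
      have : ((i : ℕ) : ℝ) * δ ≤ (n : ℝ) * δ := by nlinarith
      nlinarith
    have hsum : ∑ i : Fin n, dist (z i) (z i - (i : ℕ) * δ) ^ 2 ≤ (n : ℝ) * ((n : ℝ) * δ) ^ 2 := by
      calc ∑ i : Fin n, dist (z i) (z i - (i : ℕ) * δ) ^ 2
          ≤ ∑ _i : Fin n, ((n : ℝ) * δ) ^ 2 := Finset.sum_le_sum (fun i _ => hterm i)
        _ = (n : ℝ) * ((n : ℝ) * δ) ^ 2 := by
            rw [Finset.sum_const, Finset.card_univ, Fintype.card_fin, nsmul_eq_mul]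
    have hlt : (n : ℝ) * ((n : ℝ) * δ) ^ 2 < ε ^ 2 := by
      have h1 : (n : ℝ) * ((n : ℝ) * δ) ^ 2 = (n : ℝ) ^ 3 * ε ^ 2 / ((n : ℝ) ^ 2 + 1) ^ 2 := by
        rw [hδdef]; field_simp
      rw [h1, div_lt_iff₀ (by positivity)]
      nlinarith [mul_pos hε hε, sq_nonneg ((n : ℝ) ^ 2 * ε - (n : ℝ) * ε),
        mul_nonneg (mul_nonneg hn0 hn0) (sq_nonneg ε),
        mul_nonneg (mul_nonneg (mul_nonneg hn0 hn0) hn0) (sq_nonneg ε)]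
    calc Real.sqrt (∑ i : Fin n, dist (z i) (z i - (i : ℕ) * δ) ^ 2)
        < Real.sqrt (ε ^ 2) := by
          apply Real.sqrt_lt_sqrt (Finset.sum_nonneg fun i _ => sq_nonneg _)
          linarith
      _ = ε := Real.sqrt_sq hε.le

/-- midpoint modification lies on the frontier, at the expected distance -/
lemma mid_frontier {n : ℕ} (x : EuclideanSpace ℝ (Fin n)) (hx : StrictAnti x)
    (a b : Fin n) (hab : (a : ℕ) + 1 = (b : ℕ)) :
    ∃ z ∈ frontier {y : EuclideanSpace ℝ (Fin n) | StrictAnti y},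
      dist x z = Real.sqrt ((x a - x b) ^ 2 / 2) := by
  set c : ℝ := (x a + x b) / 2 with hc
  set z : EuclideanSpace ℝ (Fin n) := WithLp.toLp 2 (fun i => if i = a ∨ i = b then c else x i) with hzdef
  have haltb : a < b := Fin.lt_def.mpr (by omega)
  have hane : a ≠ b := ne_of_lt haltb
  have hba : x b < x a := hx haltb
  have hcb : x b ≤ c := by rw [hc]; linarith
  have hca : c ≤ x a := by rw [hc]; linarith
  have hz_a : z a = c := by simp [hzdef]
  have hz_b : z b = c := by simp [hzdef]
  have hz_other : ∀ i : Fin n, i ≠ a → i ≠ b → z i = x i := by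
    intro i h1 h2; simp [hzdef, h1, h2]
  have hanti : Antitone z := by
    intro i j hij
    have hijv : (i : ℕ) ≤ (j : ℕ) := Fin.le_def.mp hij
    have hvz : ∀ k : Fin n, (((k : ℕ) = (a : ℕ) ∨ (k : ℕ) = (b : ℕ)) ∧ z k = c) ∨
        (((k : ℕ) ≠ (a : ℕ) ∧ (k : ℕ) ≠ (b : ℕ)) ∧ z k = x k) := by
      intro k
      by_cases h : k = a ∨ k = b
      · left
        refine ⟨?_, by simp [hzdef, h]⟩
        rcases h with h | h <;> [left; right] <;> rw [h]
      · push_neg at h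
        right
        exact ⟨⟨fun hv => h.1 (Fin.ext hv), fun hv => h.2 (Fin.ext hv)⟩,
          hz_other k h.1 h.2⟩
    rcases hvz i with ⟨hiv, hzi⟩ | ⟨hiv, hzi⟩
    · rcases hvz j with ⟨hjv, hzj⟩ | ⟨hjv, hzj⟩
      · rw [hzi, hzj]
      · rw [hzi, hzj]
        obtain ⟨h1, h2⟩ := hjv
        have hbj : (b : ℕ) < (j : ℕ) := by rcases hiv with h | h <;> omega
        have : x j < x b := hx (Fin.lt_def.mpr hbj)
        linarith
    · rcases hvz j with ⟨hjv, hzj⟩ | ⟨hjv, hzj⟩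
      · rw [hzi, hzj]
        obtain ⟨h1, h2⟩ := hiv
        have hia : (i : ℕ) < (a : ℕ) := by rcases hjv with h | h <;> omega
        have : x a < x i := hx (Fin.lt_def.mpr hia)
        linarith
      · rw [hzi, hzj]
        exact hx.antitone hij
  have hnot : z ∉ {y : EuclideanSpace ℝ (Fin n) | StrictAnti y} := by
    intro h
    have := h haltb
    rw [hz_a, hz_b] at this
    exact lt_irrefl _ this
  refine ⟨z, ?_, ?_⟩
  · rw [frontier_eq_closure_inter_closure]
    exact ⟨antitone_mem_closure z hanti, subset_closure hnot⟩
  · rw [EuclideanSpace.dist_eq]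
    congr 1
    have hzero : ∀ i ∈ Finset.univ (α := Fin n), i ∉ ({a, b} : Finset (Fin n)) →
        dist (x i) (z i) ^ 2 = 0 := by
      intro i _ hi
      simp only [Finset.mem_insert, Finset.mem_singleton, not_or] at hi
      rw [hz_other i hi.1 hi.2, dist_self]
      norm_num
    rw [← Finset.sum_subset (Finset.subset_univ ({a, b} : Finset (Fin n))) hzero,
      Finset.sum_pair hane, hz_a, hz_b, Real.dist_eq, Real.dist_eq, sq_abs, sq_abs, hc]
    ring

/-- distance lower bound to a point with a weakly inverted consecutive pair -/
lemma dist_lower {n : ℕ} (x y : EuclideanSpace ℝ (Fin n)) (a b : Fin n) (hab : a ≠ b)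
    (α : ℝ) (hα : 0 < α) (hg : Real.sqrt 2 * α ≤ x a - x b) (hy : y a ≤ y b) :
    α ≤ dist x y := by
  rw [EuclideanSpace.dist_eq]
  have h2 : Real.sqrt 2 ^ 2 = 2 := Real.sq_sqrt (by norm_num)
  have hs : 0 ≤ Real.sqrt 2 := Real.sqrt_nonneg 2
  have key : α ^ 2 ≤ dist (x a) (y a) ^ 2 + dist (x b) (y b) ^ 2 := by
    rw [Real.dist_eq, Real.dist_eq, sq_abs, sq_abs]
    nlinarith [sq_nonneg ((x a - y a) + (x b - y b)), mul_nonneg hs hα.le,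
      sq_nonneg ((x a - y a) - (x b - y b) - Real.sqrt 2 * α)]
  have hsum : dist (x a) (y a) ^ 2 + dist (x b) (y b) ^ 2 ≤ ∑ i, dist (x i) (y i) ^ 2 := by
    have hp : ∑ i ∈ ({a, b} : Finset (Fin n)), dist (x i) (y i) ^ 2 =
        dist (x a) (y a) ^ 2 + dist (x b) (y b) ^ 2 := Finset.sum_pair hab
    rw [← hp]
    exact Finset.sum_le_sum_of_subset_of_nonneg (Finset.subset_univ _)
      (fun i _ _ => sq_nonneg _)
  calc α = Real.sqrt (α ^ 2) := (Real.sqrt_sq hα.le).symm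
    _ ≤ Real.sqrt (∑ i, dist (x i) (y i) ^ 2) := Real.sqrt_le_sqrt (by linarith)

theorem weyl_chamber_dist_characterization (n : ℕ) (hn : 2 ≤ n) (α : ℝ) (hα : 0 < α) :
    {x : EuclideanSpace ℝ (Fin n) |
        StrictAnti x ∧
          α ≤ Metric.infDist x (frontier {y : EuclideanSpace ℝ (Fin n) | StrictAnti y})} =
      {x : EuclideanSpace ℝ (Fin n) |
        ∀ i : Fin (n - 1),
          x ⟨i.val + 1, by have := i.isLt; omega⟩ ≤
            x ⟨i.val, by have := i.isLt; omega⟩ - Real.sqrt 2 * α} := by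
  have hs2 : Real.sqrt 2 ^ 2 = 2 := Real.sq_sqrt (by norm_num)
  have hs : 0 ≤ Real.sqrt 2 := Real.sqrt_nonneg 2
  ext x
  simp only [Set.mem_setOf_eq]
  constructor
  · rintro ⟨hx, hdist⟩ i
    have hi1 : i.val + 1 < n := by have := i.isLt; omega
    have hi0 : i.val < n := by omega
    set a : Fin n := ⟨i.val, hi0⟩ with ha
    set b : Fin n := ⟨i.val + 1, hi1⟩ with hb
    obtain ⟨z, hzf, hzd⟩ := mid_frontier x hx a b rfl
    have h1 : α ≤ dist x z := le_trans hdist (Metric.infDist_le_dist_of_mem hzf)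
    rw [hzd] at h1
    have hba : x b < x a := hx (Fin.lt_def.mpr (by simp [ha, hb]))
    have h2 : α ^ 2 ≤ Real.sqrt ((x a - x b) ^ 2 / 2) ^ 2 := pow_le_pow_left₀ hα.le h1 2
    rw [Real.sq_sqrt (by positivity)] at h2
    have hfin : Real.sqrt 2 * α ≤ x a - x b := by
      nlinarith [sq_nonneg (x a - x b - Real.sqrt 2 * α)]
    show x b ≤ x a - Real.sqrt 2 * α
    linarith
  · intro hgap
    have hgap' : ∀ k : ℕ, ∀ h : k + 1 < n,
        x ⟨k + 1, h⟩ ≤ x ⟨k, by omega⟩ - Real.sqrt 2 * α := by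
      intro k h
      exact hgap ⟨k, by omega⟩
    have hcons : ∀ i j : Fin n, (i : ℕ) + 1 = (j : ℕ) → Real.sqrt 2 * α ≤ x i - x j := by
      intro i j hij
      have hi1 : (i : ℕ) + 1 < n := by have := j.isLt; omega
      have h := hgap' (i : ℕ) hi1
      have e1 : (⟨(i : ℕ), by omega⟩ : Fin n) = i := Fin.ext rfl
      have e2 : (⟨(i : ℕ) + 1, hi1⟩ : Fin n) = j := Fin.ext hij
      rw [e1, e2] at h
      linarith
    have hxa : StrictAnti x := (strictAnti_iff_consec x).mpr (by
      intro i j hij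
      have := hcons i j hij
      have h2a : 0 < Real.sqrt 2 * α := by
        have : (0:ℝ) < Real.sqrt 2 := Real.sqrt_pos.mpr (by norm_num)
        positivity
      linarith)
    refine ⟨hxa, ?_⟩
    obtain ⟨z0, hz0, _⟩ := mid_frontier x hxa ⟨0, by omega⟩ ⟨1, by omega⟩ rfl
    by_contra hcon
    push_neg at hcon
    obtain ⟨y, hy, hylt⟩ := (Metric.infDist_lt_iff ⟨z0, hz0⟩).mp hcon
    have hybound : α ≤ dist x y := by
      have hy' : y ∈ closure ({y : EuclideanSpace ℝ (Fin n) | StrictAnti y}ᶜ) := by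
        rw [frontier_eq_closure_inter_closure] at hy
        exact hy.2
      have hclosed : IsClosed {w : EuclideanSpace ℝ (Fin n) | α ≤ dist x w} :=
        isClosed_le continuous_const (Continuous.dist continuous_const continuous_id)
      have hsub : ({y : EuclideanSpace ℝ (Fin n) | StrictAnti y}ᶜ) ⊆
          {w : EuclideanSpace ℝ (Fin n) | α ≤ dist x w} := by
        intro w hw
        obtain ⟨a, b, hab, hba⟩ : ∃ a b : Fin n, (a : ℕ) + 1 = (b : ℕ) ∧ w a ≤ w b := by
          by_contra hc
          push_neg at hc
          exact hw ((strictAnti_iff_consec w).mpr fun i j h => hc i j h)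
        exact dist_lower x w a b (fun h => by omega) α hα (hcons a b hab) hba
      exact closure_minimal hsub hclosed hy'
    linarith
end
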